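/- The logics K4C_n form a strictly decreasing sequence: for every n ≥ 0, K4C_{n+1} ⊆ K4C_n and K4C_{n+1} ≠ K4C_n. -/

import Mathlib

/-- Modal formulas: variables, ⊤, ¬, ∧, □. -/
inductive Fml : Type
  | var : ℕ → Fml
  | top : Fml
  | neg : Fml → Fml
  | and : Fml → Fml → Fml
  | box : Fml → Fml
deriving DecidableEq

namespace Fml
/-- Material implication, defined from ¬ and ∧. -/
def imp (φ ψ : Fml) : Fml := .neg (.and φ (.neg ψ))
/-- Disjunction. -/
def or (φ ψ : Fml) : Fml := .neg (.and (.neg φ) (.neg ψ))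
/-- ◇φ := ¬□¬φ. -/
def dia (φ : Fml) : Fml := .neg (.box (.neg φ))
/-- □*φ := φ ∧ □φ. -/
def boxs (φ : Fml) : Fml := .and φ (.box φ)
/-- ◇*φ := φ ∨ ◇φ. -/
def dias (φ : Fml) : Fml := Fml.or φ (dia φ)
end Fml

/-- Kripke satisfaction. -/
def sat {W : Type} (R : W → W → Prop) (V : ℕ → Set W) : W → Fml → Prop
  | x, .var p => x ∈ V p
  | _, .top => True
  | x, .neg φ => ¬ sat R V x φ
  | x, .and φ ψ => sat R V x φ ∧ sat R V x ψ
  | x, .box φ => ∀ y, R x y → sat R V y φ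

/-- P_n(φ0; φ1,...,φn): P_0(φ0) = ◇φ0, P_n(φ0,φ1,...,φn) = ◇(φ1 ∧ P_{n-1}(φ0,φ2,...,φn)). -/
def Pfml (φ0 : Fml) : List Fml → Fml
  | [] => φ0.dia
  | ψ :: rest => (Fml.and ψ (Pfml φ0 rest)).dia

/-- Conjunction of ¬(φ ∧ ψ) for ψ in the list. -/
def conjNeg (φ : Fml) : List Fml → Fml
  | [] => .top
  | ψ :: rest => .and (.neg (.and φ ψ)) (conjNeg φ rest)

/-- D_n: pairwise disjointness conjunction ⋀_{i<j} ¬(φ_i ∧ φ_j). -/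
def Dfml : List Fml → Fml
  | [] => .top
  | φ :: rest => .and (conjNeg φ rest) (Dfml rest)

/-- The scheme C_n instance on φ0,φ1,...,φn (φs = [φ1,...,φn]). -/
def Cfml (φ0 : Fml) (φs : List Fml) : Fml :=
  ((Dfml (φ0 :: φs)).boxs).imp ((φ0.dia).imp ((Fml.and φ0 (Fml.neg (Pfml φ0 φs))).dia))

/-- The scheme C_n* instance: as C_n but with ◇* in the consequent. -/
def CfmlStar (φ0 : Fml) (φs : List Fml) : Fml :=
  ((Dfml (φ0 :: φs)).boxs).imp ((φ0.dia).imp ((Fml.and φ0 (Fml.neg (Pfml φ0 φs))).dias))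

/-- An ascending R-chain. -/
def AscChain {W : Type} (R : W → W → Prop) (x : ℕ → W) : Prop := ∀ m, R (x m) (x (m+1))

/-- A strictly ascending R-chain. -/
def StrictAscChain {W : Type} (R : W → W → Prop) (x : ℕ → W) : Prop :=
  AscChain R x ∧ ∀ m, ¬ R (x (m+1)) (x m)

/-- The R-cluster of x. -/
def cluster {W : Type} (R : W → W → Prop) (x : W) : Set W := {y | x = y ∨ (R x y ∧ R y x)}

/-- The frame has a cycle of length k (k ≥ 1): k distinct points x_0 R x_1 R ... R x_{k-1} R x_0. -/
def HasCycle {W : Type} (R : W → W → Prop) (k : ℕ) : Prop :=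
  1 ≤ k ∧ ∃ x : ℕ → W, (∀ i j, i < k → j < k → x i = x j → i = j) ∧
    ∀ i < k, R (x i) (x ((i+1) % k))

/-- Circumference at most n: every cycle has length ≤ n. -/
def CircumLE {W : Type} (R : W → W → Prop) (n : ℕ) : Prop := ∀ k, HasCycle R k → k ≤ n

/-- The frame (W,R) validates the scheme C_n. -/
def ValidatesCn {W : Type} (R : W → W → Prop) (n : ℕ) : Prop :=
  ∀ (V : ℕ → Set W) (x : W) (φ0 : Fml) (φs : List Fml), φs.length = n →
    sat R V x (Cfml φ0 φs)

/-- A Boolean valuation on formulas (box-formulas and variables as atoms). -/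
def BoolEval (w : Fml → Bool) : Prop :=
  w .top = true ∧ (∀ φ, w (.neg φ) = !w φ) ∧ (∀ φ ψ, w (.and φ ψ) = (w φ && w ψ))

/-- Propositional tautologies. -/
def Tautology (φ : Fml) : Prop := ∀ w, BoolEval w → w φ = true

/-- Theorems of the smallest normal modal logic containing the axiom set Ax. -/
inductive Prov (Ax : Set Fml) : Fml → Prop
  | taut {φ} : Tautology φ → Prov Ax φ
  | kax (φ ψ) : Prov Ax ((Fml.box (φ.imp ψ)).imp ((Fml.box φ).imp (Fml.box ψ)))
  | ax {φ} : φ ∈ Ax → Prov Ax φ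
  | mp {φ ψ} : Prov Ax (φ.imp ψ) → Prov Ax φ → Prov Ax ψ
  | nec {φ} : Prov Ax φ → Prov Ax (.box φ)

/-- All instances of the transitivity scheme 4. -/
def Ax4 : Set Fml := {χ | ∃ φ, χ = (Fml.box φ).imp (Fml.box (Fml.box φ))}

/-- Axioms of K4C_n: scheme 4 together with all instances of scheme C_n. -/
def AxK4C (n : ℕ) : Set Fml :=
  Ax4 ∪ {χ | ∃ (φ0 : Fml) (φs : List Fml), φs.length = n ∧ χ = Cfml φ0 φs}


/-! ### Auxiliary material -/

section Aux

open Classical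

/-! #### Propositional reasoning -/

lemma beval_imp {w : Fml → Bool} (hw : BoolEval w) (a b : Fml) :
    w (a.imp b) = true ↔ (w a = true → w b = true) := by
  obtain ⟨-, hn, ha⟩ := hw
  simp only [Fml.imp, hn, ha]
  cases w a <;> cases w b <;> simp

lemma taut_imp_of {a b : Fml}
    (h : ∀ w, BoolEval w → w a = true → w b = true) : Tautology (a.imp b) := by
  intro w hw
  exact (beval_imp hw a b).2 (h w hw)

lemma T1 (a b c : Fml) : Tautology ((a.imp b).imp ((b.imp c).imp (a.imp c))) := by
  intro w hw
  obtain ⟨-, hn, ha⟩ := hw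
  simp only [Fml.imp, hn, ha]
  cases w a <;> cases w b <;> cases w c <;> rfl

lemma T2 (a b : Fml) : Tautology ((a.imp b).imp ((b.neg).imp (a.neg))) := by
  intro w hw
  obtain ⟨-, hn, ha⟩ := hw
  simp only [Fml.imp, hn, ha]
  cases w a <;> cases w b <;> rfl

lemma T3 (a b c : Fml) : Tautology ((a.imp b).imp ((Fml.and c a).imp (Fml.and c b))) := by
  intro w hw
  obtain ⟨-, hn, ha⟩ := hw
  simp only [Fml.imp, hn, ha]
  cases w a <;> cases w b <;> cases w c <;> rfl

lemma T4 (a b c : Fml) :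
    Tautology ((a.imp b).imp ((Fml.and c b.neg).imp (Fml.and c a.neg))) := by
  intro w hw
  obtain ⟨-, hn, ha⟩ := hw
  simp only [Fml.imp, hn, ha]
  cases w a <;> cases w b <;> cases w c <;> rfl

lemma T5 (a b : Fml) : Tautology ((Fml.and a b).imp b) := by
  intro w hw
  obtain ⟨-, hn, ha⟩ := hw
  simp only [Fml.imp, hn, ha]
  cases w a <;> cases w b <;> rfl

lemma T6 (a : Fml) : Tautology (a.imp a.neg.neg) := by
  intro w hw
  obtain ⟨-, hn, ha⟩ := hw
  simp only [Fml.imp, hn, ha]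
  cases w a <;> rfl

lemma T7 (p q r s t : Fml) :
    Tautology ((p.imp (q.imp r)).imp ((s.imp p).imp ((r.imp t).imp (s.imp (q.imp t))))) := by
  intro w hw
  obtain ⟨-, hn, ha⟩ := hw
  simp only [Fml.imp, hn, ha]
  cases w p <;> cases w q <;> cases w r <;> cases w s <;> cases w t <;> rfl

lemma T8 (a b A B : Fml) :
    Tautology ((a.imp b).imp ((A.imp B).imp ((Fml.and a A).imp (Fml.and b B)))) := by
  intro w hw
  obtain ⟨-, hn, ha⟩ := hw
  simp only [Fml.imp, hn, ha]
  cases w a <;> cases w b <;> cases w A <;> cases w B <;> rfl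

/-! #### Derived rules of Prov -/

variable {Ax : Set Fml}

lemma prov_trans {a b c : Fml} (h1 : Prov Ax (a.imp b)) (h2 : Prov Ax (b.imp c)) :
    Prov Ax (a.imp c) :=
  Prov.mp (Prov.mp (Prov.taut (T1 a b c)) h1) h2

lemma prov_box_mono {a b : Fml} (h : Prov Ax (a.imp b)) :
    Prov Ax ((Fml.box a).imp (Fml.box b)) :=
  Prov.mp (Prov.kax a b) (Prov.nec h)

lemma prov_contra {a b : Fml} (h : Prov Ax (a.imp b)) :
    Prov Ax ((b.neg).imp (a.neg)) :=
  Prov.mp (Prov.taut (T2 a b)) h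

lemma prov_dia_mono {a b : Fml} (h : Prov Ax (a.imp b)) :
    Prov Ax ((a.dia).imp (b.dia)) :=
  prov_contra (prov_box_mono (prov_contra h))

lemma prov_dia_dia (n : ℕ) (a : Fml) :
    Prov (AxK4C n) ((a.dia.dia).imp (a.dia)) := by
  have h4 : Prov (AxK4C n) ((Fml.box a.neg).imp (Fml.box (Fml.box a.neg))) :=
    Prov.ax (Or.inl ⟨a.neg, rfl⟩)
  have h6 : Prov (AxK4C n) ((Fml.box a.neg).imp ((Fml.box a.neg).neg.neg)) :=
    Prov.taut (T6 _)
  have h := prov_trans h4 (prov_box_mono h6)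
  exact prov_contra h

lemma prov_P_drop (n : ℕ) (φ0 ψ : Fml) :
    ∀ l : List Fml, Prov (AxK4C n) ((Pfml φ0 (l ++ [ψ])).imp (Pfml φ0 l))
  | [] => by
      have h1 : Prov (AxK4C n) ((Fml.and ψ φ0.dia).imp (φ0.dia)) := Prov.taut (T5 _ _)
      have h2 := prov_dia_mono h1
      exact prov_trans h2 (prov_dia_dia n φ0)
  | h :: t => by
      have ih := prov_P_drop n φ0 ψ t
      have h3 : Prov (AxK4C n)
          ((Fml.and h (Pfml φ0 (t ++ [ψ]))).imp (Fml.and h (Pfml φ0 t))) :=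
        Prov.mp (Prov.taut (T3 _ _ _)) ih
      exact prov_dia_mono h3

lemma conjNeg_drop {w : Fml → Bool} (hw : BoolEval w) (φ ψ : Fml) :
    ∀ l : List Fml, w (conjNeg φ (l ++ [ψ])) = true → w (conjNeg φ l) = true
  | [] => fun _ => hw.1
  | h :: t => by
      intro hx
      rw [show ((h :: t) ++ [ψ]) = h :: (t ++ [ψ]) from rfl] at hx
      simp only [conjNeg, hw.2.2, Bool.and_eq_true] at hx ⊢
      exact ⟨hx.1, conjNeg_drop hw φ ψ t hx.2⟩

lemma Dfml_drop {w : Fml → Bool} (hw : BoolEval w) (ψ : Fml) :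
    ∀ l : List Fml, w (Dfml (l ++ [ψ])) = true → w (Dfml l) = true
  | [] => fun _ => hw.1
  | h :: t => by
      intro hx
      rw [show ((h :: t) ++ [ψ]) = h :: (t ++ [ψ]) from rfl] at hx
      simp only [Dfml, hw.2.2, Bool.and_eq_true] at hx ⊢
      exact ⟨conjNeg_drop hw h ψ t hx.1, Dfml_drop hw ψ t hx.2⟩

lemma prov_C_succ (n : ℕ) (φ0 : Fml) (φs : List Fml) (hlen : φs.length = n + 1) :
    Prov (AxK4C n) (Cfml φ0 φs) := by
  obtain hnil | ⟨l, ψ, rfl⟩ := φs.eq_nil_or_concat'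
  · subst hnil; simp at hlen
  · have hl : l.length = n := by simpa using hlen
    -- the C_n axiom instance
    have A0 : Prov (AxK4C n) (Cfml φ0 l) := Prov.ax (Or.inr ⟨φ0, l, hl, rfl⟩)
    have h1 : Prov (AxK4C n)
        ((Dfml (φ0 :: (l ++ [ψ]))).imp (Dfml (φ0 :: l))) :=
      Prov.taut (taut_imp_of (fun w hw hx =>
        Dfml_drop hw ψ (φ0 :: l) hx))
    have h2 : Prov (AxK4C n)
        (((Dfml (φ0 :: (l ++ [ψ]))).boxs).imp ((Dfml (φ0 :: l)).boxs)) :=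
      Prov.mp (Prov.mp (Prov.taut (T8 _ _ _ _)) h1) (prov_box_mono h1)
    have h3 := prov_P_drop n φ0 ψ l
    have h4 : Prov (AxK4C n)
        ((Fml.and φ0 (Pfml φ0 l).neg).imp (Fml.and φ0 (Pfml φ0 (l ++ [ψ])).neg)) :=
      Prov.mp (Prov.taut (T4 _ _ _)) h3
    have h5 := prov_dia_mono h4
    exact Prov.mp (Prov.mp (Prov.mp (Prov.taut
      (T7 ((Dfml (φ0 :: l)).boxs) (φ0.dia)
          ((Fml.and φ0 (Pfml φ0 l).neg).dia)
          ((Dfml (φ0 :: (l ++ [ψ]))).boxs)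
          ((Fml.and φ0 (Pfml φ0 (l ++ [ψ])).neg).dia))) A0) h2) h5

lemma prov_mono (n : ℕ) : ∀ {φ : Fml}, Prov (AxK4C (n+1)) φ → Prov (AxK4C n) φ := by
  intro φ h
  induction h with
  | taut h => exact Prov.taut h
  | kax a b => exact Prov.kax a b
  | ax h =>
      rcases h with h4 | ⟨φ0, φs, hlen, rfl⟩
      · exact Prov.ax (Or.inl h4)
      · exact prov_C_succ n φ0 φs hlen
  | mp _ _ ih1 ih2 => exact Prov.mp ih1 ih2
  | nec _ ih => exact Prov.nec ih

/-! #### Semantics -/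

lemma sat_imp {W : Type} {R : W → W → Prop} {V : ℕ → Set W} {x : W} {a b : Fml} :
    sat R V x (a.imp b) ↔ (sat R V x a → sat R V x b) := by
  simp only [Fml.imp, sat]
  tauto

lemma sat_dia {W : Type} {R : W → W → Prop} {V : ℕ → Set W} {x : W} {a : Fml} :
    sat R V x (a.dia) ↔ ∃ y, R x y ∧ sat R V y a := by
  simp only [Fml.dia, sat]
  push_neg
  rfl

lemma soundness {W : Type} (R : W → W → Prop) (m : ℕ) (hT : Transitive R)
    (hC : ValidatesCn R m) {φ : Fml} (h : Prov (AxK4C m) φ) :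
    ∀ (V : ℕ → Set W) (x : W), sat R V x φ := by
  induction h with
  | @taut ψ ht =>
      intro V x
      have hb : BoolEval (fun χ => decide (sat R V x χ)) := by
        refine ⟨by show decide (sat R V x .top) = true; exact decide_eq_true (show sat R V x .top from trivial), fun χ => ?_, fun χ1 χ2 => ?_⟩
        · by_cases h : sat R V x χ <;> simp [sat, h]
        · by_cases h1 : sat R V x χ1 <;> by_cases h2 : sat R V x χ2 <;>
            simp [sat, h1, h2]
      have := ht _ hb
      exact of_decide_eq_true this
  | kax a b =>
      intro V x
      rw [sat_imp, sat_imp]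
      intro h1 h2 y hy
      have := h1 y hy
      rw [sat_imp] at this
      exact this (h2 y hy)
  | ax h =>
      rcases h with ⟨a, rfl⟩ | ⟨φ0, φs, hlen, rfl⟩
      · intro V x
        rw [sat_imp]
        intro h1 y hxy z hyz
        exact h1 z (hT hxy hyz)
      · intro V x
        exact hC V x φ0 φs hlen
  | mp _ _ ih1 ih2 =>
      intro V x
      have := ih1 V x
      rw [sat_imp] at this
      exact this (ih2 V x)
  | nec _ ih =>
      intro V x
      exact fun y _ => ih V y

lemma P_extract {W : Type} (R : W → W → Prop) (V : ℕ → Set W) (φ0 : Fml) :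
    ∀ (l : List Fml) (z : W), sat R V z (Pfml φ0 l) →
      (∃ v0, sat R V v0 φ0) ∧ ∀ i : Fin l.length, ∃ v, sat R V v (l.get i)
  | [], z => by
      intro h
      rw [show Pfml φ0 [] = φ0.dia from rfl, sat_dia] at h
      obtain ⟨y, -, hy⟩ := h
      exact ⟨⟨y, hy⟩, fun i => i.elim0⟩
  | ψ :: t, z => by
      intro h
      rw [show Pfml φ0 (ψ :: t) = (Fml.and ψ (Pfml φ0 t)).dia from rfl, sat_dia] at h
      obtain ⟨y, -, hy1, hy2⟩ := h
      obtain ⟨h0, hrest⟩ := P_extract R V φ0 t y hy2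
      refine ⟨h0, fun i => ?_⟩
      refine Fin.cases ?_ ?_ i
      · exact ⟨y, hy1⟩
      · intro j; exact hrest j

lemma sat_conjNeg {W : Type} {R : W → W → Prop} {V : ℕ → Set W} {v : W} {φ : Fml} :
    ∀ {l : List Fml}, sat R V v (conjNeg φ l) ↔
      ∀ ψ ∈ l, ¬(sat R V v φ ∧ sat R V v ψ)
  | [] => by simp [conjNeg, sat]
  | h :: t => by
      simp only [conjNeg, sat, List.mem_cons]
      rw [sat_conjNeg]
      constructor
      · rintro ⟨h1, h2⟩ ψ (rfl | hm)
        · exact h1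
        · exact h2 ψ hm
      · intro hh
        exact ⟨hh h (Or.inl rfl), fun ψ hm => hh ψ (Or.inr hm)⟩

lemma sat_Dfml {W : Type} {R : W → W → Prop} {V : ℕ → Set W} {v : W} :
    ∀ {l : List Fml}, sat R V v (Dfml l) ↔
      l.Pairwise (fun a b => ¬(sat R V v a ∧ sat R V v b))
  | [] => by simp [Dfml, sat]
  | h :: t => by
      simp only [Dfml, sat, List.pairwise_cons]
      rw [sat_conjNeg, sat_Dfml]

/-- A universal frame on a finite type of cardinality ≤ m validates C_m. -/
lemma cluster_validates (m : ℕ) (W : Type) [Fintype W] (hcard : Fintype.card W ≤ m) :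
    ValidatesCn (fun _ _ : W => True) m := by
  classical
  intro V x φ0 φs hlen
  rw [show Cfml φ0 φs =
    ((Dfml (φ0 :: φs)).boxs).imp ((φ0.dia).imp
      ((Fml.and φ0 (Fml.neg (Pfml φ0 φs))).dia)) from rfl]
  rw [sat_imp, sat_imp]
  intro hD h0
  rw [sat_dia] at h0
  obtain ⟨y, -, hy0⟩ := h0
  rw [sat_dia]
  refine ⟨y, trivial, hy0, ?_⟩
  intro hP
  obtain ⟨⟨v0, hv0⟩, hvs⟩ := P_extract _ V φ0 φs y hP
  have hDall : ∀ v : W, sat (fun _ _ : W => True) V v (Dfml (φ0 :: φs)) := by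
    intro v
    exact hD.2 v trivial
  -- build an injection Fin (φs.length + 1) → W
  choose f hf using hvs
  let L : List Fml := φ0 :: φs
  let g : Fin (φs.length + 1) → W := fun i => Fin.cases v0 f i
  have hg : ∀ i : Fin (φs.length + 1), sat (fun _ _ : W => True) V (g i)
      (L.get (Fin.cast (by simp [L]) i)) := by
    intro i
    refine Fin.cases ?_ ?_ i
    · exact hv0
    · intro j; exact hf j
  have hginj : Function.Injective g := by
    intro i j hij
    by_contra hne
    rcases Ne.lt_or_gt hne with hlt | hlt
    · have hpw := (sat_Dfml (v := g i)).1 (hDall (g i))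
      have := (List.pairwise_iff_get.1 hpw)
        (Fin.cast (by simp [L]) i) (Fin.cast (by simp [L]) j) (by simpa using hlt)
      exact this ⟨hg i, hij ▸ hg j⟩
    · have hpw := (sat_Dfml (v := g j)).1 (hDall (g j))
      have := (List.pairwise_iff_get.1 hpw)
        (Fin.cast (by simp [L]) j) (Fin.cast (by simp [L]) i) (by simpa using hlt)
      exact this ⟨hg j, hij ▸ hg i⟩
  have := Fintype.card_le_of_injective g hginj
  simp [hlen] at this
  omega

/-! #### The failing C_n instance on the universal (n+1)-cluster -/

lemma refute_Cn (n : ℕ) :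
    ¬ sat (fun _ _ : Fin (n+1) => True) (fun p => {w | (w : ℕ) = p}) 0
      (Cfml (.var 0) ((List.range' 1 n).map Fml.var)) := by
  set R : Fin (n+1) → Fin (n+1) → Prop := fun _ _ => True with hR
  set V : ℕ → Set (Fin (n+1)) := fun p => {w | (w : ℕ) = p} with hV
  -- every world satisfies Pfml over a var-range provided the points exist
  have hPall : ∀ (b a : ℕ), a + b ≤ n + 1 →
      ∀ z : Fin (n+1), sat R V z (Pfml (.var 0) ((List.range' a b).map Fml.var)) := by
    intro b
    induction b with
    | zero =>
        intro a ha z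
        rw [show ((List.range' a 0).map Fml.var) = [] by simp,
          show Pfml (Fml.var 0) ([] : List Fml) = (Fml.var 0).dia from rfl, sat_dia]
        exact ⟨⟨0, by omega⟩, trivial, rfl⟩
    | succ b ih =>
        intro a ha z
        rw [show ((List.range' a (b+1)).map Fml.var) =
          Fml.var a :: ((List.range' (a+1) b).map Fml.var) by
            rw [List.range'_succ]; rfl]
        rw [show Pfml (.var 0) (Fml.var a :: ((List.range' (a+1) b).map Fml.var)) =
          (Fml.and (Fml.var a) (Pfml (.var 0) ((List.range' (a+1) b).map Fml.var))).dia
          from rfl, sat_dia]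
        refine ⟨⟨a, by omega⟩, trivial, rfl, ih (a+1) (by omega) _⟩
  intro hsat
  rw [show Cfml (.var 0) ((List.range' 1 n).map Fml.var) =
    ((Dfml ((.var 0) :: (List.range' 1 n).map Fml.var)).boxs).imp
      (((Fml.var 0).dia).imp
        ((Fml.and (.var 0) (Fml.neg (Pfml (.var 0) ((List.range' 1 n).map Fml.var)))).dia))
    from rfl, sat_imp, sat_imp] at hsat
  -- the box-star D antecedent holds
  have hD : ∀ v : Fin (n+1), sat R V v (Dfml ((.var 0) :: (List.range' 1 n).map Fml.var)) := by
    intro v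
    rw [show ((Fml.var 0) :: (List.range' 1 n).map Fml.var) =
      (List.range' 0 (n+1)).map Fml.var by rw [List.range'_succ]; rfl]
    rw [sat_Dfml, List.pairwise_map]
    have hnd : (List.range' 0 (n+1)).Pairwise (· ≠ ·) := (List.nodup_range' ..)
    refine hnd.imp ?_
    intro a b hab ⟨h1, h2⟩
    exact hab (h1.symm.trans h2 : _)
  have h1 := hsat ⟨hD 0, fun y _ => hD y⟩ (by
    rw [sat_dia]; exact ⟨⟨0, by omega⟩, trivial, rfl⟩)
  rw [sat_dia] at h1
  obtain ⟨z, -, hz0, hzP⟩ := h1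
  exact hzP (hPall n 1 (by omega) z)

end Aux

/-- the logics K4C_n form a strictly decreasing sequence. -/
theorem stmt12 (n : ℕ) :
    {φ : Fml | Prov (AxK4C (n+1)) φ} ⊂ {φ : Fml | Prov (AxK4C n) φ} := by
  rw [Set.ssubset_def]
  constructor
  · intro φ h
    exact prov_mono n h
  · intro hsub
    have hA : Prov (AxK4C n) (Cfml (.var 0) ((List.range' 1 n).map Fml.var)) :=
      Prov.ax (Or.inr ⟨.var 0, (List.range' 1 n).map Fml.var, by simp, rfl⟩)
    have hA1 : Prov (AxK4C (n+1)) (Cfml (.var 0) ((List.range' 1 n).map Fml.var)) := hsub hA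
    have hs := soundness (fun _ _ : Fin (n+1) => True) (n+1)
      (fun _ _ _ _ _ => trivial)
      (cluster_validates (n+1) (Fin (n+1)) (by simp)) hA1
      (fun p => {w | (w : ℕ) = p}) 0
    exact refute_Cn n hs
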